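/- Gauss's hypergeometric theorem: for complex a, b, c with Re(c - a - b) > 0 and c not a nonpositive integer, the series \sum_{k=0}^{\infty} ((a)_k (b)_k)/((c)_k k!) converges and equals \Gamma(c)\Gamma(c-a-b)/(\Gamma(c-a)\Gamma(c-b)). -/

import Mathlib

open Complex

open Filter Finset Topology Polynomial

noncomputable def gpoch (x : ℂ) (k : ℕ) : ℂ := (ascPochhammer ℂ k).eval x

lemma gpoch_prod (x : ℂ) (k : ℕ) : gpoch x k = ∏ j ∈ range k, (x + j) := by
  induction k with
  | zero => simp [gpoch]
  | succ n ih =>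
    rw [gpoch, ascPochhammer_succ_right, prod_range_succ, ← ih]
    simp [gpoch]

lemma gpoch_zero (x : ℂ) : gpoch x 0 = 1 := by simp [gpoch]

lemma gpoch_succ (x : ℂ) (k : ℕ) : gpoch x (k+1) = gpoch x k * (x + k) := by
  simp [gpoch_prod, prod_range_succ]

lemma gpoch_succ_left (x : ℂ) (k : ℕ) : gpoch x (k+1) = x * gpoch (x+1) k := by
  rw [gpoch_prod, gpoch_prod, prod_range_succ']
  simp only [Nat.cast_zero, add_zero, mul_comm]
  congr 1
  exact prod_congr rfl fun j _ => by push_cast; ring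

lemma gpoch_ne_zero {c : ℂ} (hc : ∀ m : ℕ, c ≠ -m) (k : ℕ) : gpoch c k ≠ 0 := by
  rw [gpoch_prod]
  exact prod_ne_zero_iff.2 fun j _ => by
    intro h
    exact hc j (by linear_combination h)

lemma gpoch_div_tendsto (s : ℂ) :
    Tendsto (fun n : ℕ => gpoch s (n+1) / ((n:ℂ)^s * n.factorial)) atTop
      (𝓝 (Complex.Gamma s)⁻¹) := by
  have h : ∀ n : ℕ, gpoch s (n+1) / ((n:ℂ)^s * n.factorial) = (Complex.GammaSeq s n)⁻¹ := fun n => by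
    rw [Complex.GammaSeq, ← gpoch_prod, inv_div]
  simp_rw [h]
  by_cases hs : ∀ m : ℕ, s ≠ -m
  · exact (Complex.GammaSeq_tendsto_Gamma s).inv₀ (Complex.Gamma_ne_zero hs)
  · push_neg at hs
    obtain ⟨m, hm⟩ := hs
    have h0 : Complex.Gamma s = 0 := by
      rw [hm]; exact Complex.Gamma_neg_nat_eq_zero m
    rw [h0, inv_zero]
    apply Tendsto.congr' (f₁ := fun _ : ℕ => (0:ℂ)) _ tendsto_const_nhds
    filter_upwards [eventually_ge_atTop m] with n hn
    rw [← h n]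
    have : gpoch s (n+1) = 0 := by
      rw [gpoch_prod]
      apply prod_eq_zero (mem_range.2 (Nat.lt_succ_of_le hn))
      rw [hm]; ring
    simp [this]

noncomputable def gterm (a b c : ℂ) (k : ℕ) : ℂ :=
  gpoch a k * gpoch b k / (gpoch c k * k.factorial)

lemma key_tendsto (a b c : ℂ) (hc : ∀ m : ℕ, c ≠ -m) :
    Tendsto (fun n : ℕ => ((n:ℂ)+1) * gterm a b c (n+1) * (n:ℂ)^(c-a-b)) atTop
      (𝓝 (Complex.Gamma c / (Complex.Gamma a * Complex.Gamma b))) := by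
  have hΓc : Complex.Gamma c ≠ 0 := Complex.Gamma_ne_zero hc
  have h := (((gpoch_div_tendsto a).mul (gpoch_div_tendsto b)).div (gpoch_div_tendsto c)
    (by simpa using hΓc))
  have hval : (Complex.Gamma a)⁻¹ * (Complex.Gamma b)⁻¹ / (Complex.Gamma c)⁻¹
      = Complex.Gamma c / (Complex.Gamma a * Complex.Gamma b) := by
    rw [← mul_inv, div_eq_mul_inv, inv_inv, mul_comm, div_eq_mul_inv]
  rw [hval] at h
  apply h.congr'
  filter_upwards [eventually_ge_atTop 1] with n hn
  have hn0 : (n:ℂ) ≠ 0 := Nat.cast_ne_zero.2 (by omega)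
  have hcab : (n:ℂ)^(c-a-b) = (n:ℂ)^c / (n:ℂ)^a / (n:ℂ)^b := by
    rw [Complex.cpow_sub _ _ hn0, Complex.cpow_sub _ _ hn0]
  have hpc := gpoch_ne_zero hc (n+1)
  have ha' : (n:ℂ)^a ≠ 0 := by
    intro h0; exact hn0 ((Complex.cpow_eq_zero_iff _ _).1 h0).1
  have hb' : (n:ℂ)^b ≠ 0 := by
    intro h0; exact hn0 ((Complex.cpow_eq_zero_iff _ _).1 h0).1
  have hc' : (n:ℂ)^c ≠ 0 := by
    intro h0; exact hn0 ((Complex.cpow_eq_zero_iff _ _).1 h0).1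
  have hfac : ((n+1).factorial : ℂ) = ((n:ℂ)+1) * (n.factorial : ℂ) := by
    rw [Nat.factorial_succ]; push_cast; ring
  have hfn : (n.factorial : ℂ) ≠ 0 := Nat.cast_ne_zero.2 n.factorial_ne_zero
  have hn1 : ((n:ℂ)+1) ≠ 0 := by
    have : ((n:ℂ)+1) = ((n+1 : ℕ) : ℂ) := by push_cast; ring
    rw [this]
    exact Nat.cast_ne_zero.2 (Nat.succ_ne_zero n)
  rw [gterm, hcab, hfac]
  simp only [Pi.div_apply, Pi.mul_apply]
  field_simp

lemma key_tendsto_norm (a b c : ℂ) (hc : ∀ m : ℕ, c ≠ -m) :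
    Tendsto (fun n : ℕ => ((n:ℝ)+1) * ‖gterm a b c (n+1)‖ * (n:ℝ)^((c-a-b).re)) atTop
      (𝓝 ‖Complex.Gamma c / (Complex.Gamma a * Complex.Gamma b)‖) := by
  have h := (key_tendsto a b c hc).norm
  apply h.congr'
  filter_upwards [eventually_ge_atTop 1] with n hn
  have hn0 : (0:ℝ) < (n:ℝ) := by exact_mod_cast Nat.pos_of_ne_zero (by omega)
  rw [norm_mul, norm_mul]
  have h1 : ‖((n:ℂ)+1)‖ = (n:ℝ)+1 := by
    have : ((n:ℂ)+1) = (((n+1:ℕ)):ℂ) := by push_cast; ring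
    rw [this, Complex.norm_natCast]; push_cast; ring
  have h2 : ‖(n:ℂ)^(c-a-b)‖ = (n:ℝ)^((c-a-b).re) := by
    rw [show ((n:ℕ):ℂ) = (((n:ℝ)):ℂ) by push_cast; rfl]
    rw [Complex.norm_cpow_eq_rpow_re_of_pos hn0]
  rw [h1, h2]

lemma summable_norm_gterm (a b c : ℂ) (hc : ∀ m : ℕ, c ≠ -m) (hre : 0 < (c-a-b).re) :
    Summable (fun k => ‖gterm a b c k‖) := by
  set ε := (c-a-b).re
  set K := ‖Complex.Gamma c / (Complex.Gamma a * Complex.Gamma b)‖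
  have hev : ∀ᶠ n : ℕ in atTop, ((n:ℝ)+1) * ‖gterm a b c (n+1)‖ * (n:ℝ)^ε < K + 1 :=
    (key_tendsto_norm a b c hc).eventually_lt_const (lt_add_one K)
  rw [← summable_nat_add_iff 1]
  apply Summable.of_norm_bounded_eventually_nat (g := fun n => (K+1) * (n:ℝ)^(-(1+ε)))
  · exact (Real.summable_nat_rpow.2 (by linarith)).mul_left _
  · filter_upwards [hev, eventually_ge_atTop 1] with n hn hn1
    have hn0 : (0:ℝ) < (n:ℝ) := by exact_mod_cast Nat.pos_of_ne_zero (by omega)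
    rw [norm_norm]
    have h1 : (n:ℝ)^(1+ε) ≤ ((n:ℝ)+1) * (n:ℝ)^ε := by
      rw [Real.rpow_add hn0, Real.rpow_one]
      have := Real.rpow_pos_of_pos hn0 ε
      nlinarith
    have h2 : ‖gterm a b c (n+1)‖ * (n:ℝ)^(1+ε) ≤ K + 1 := by
      calc ‖gterm a b c (n+1)‖ * (n:ℝ)^(1+ε)
          ≤ ‖gterm a b c (n+1)‖ * (((n:ℝ)+1) * (n:ℝ)^ε) := by
            apply mul_le_mul_of_nonneg_left h1 (norm_nonneg _)
        _ = ((n:ℝ)+1) * ‖gterm a b c (n+1)‖ * (n:ℝ)^ε := by ring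
        _ ≤ K + 1 := hn.le
    rw [Real.rpow_neg hn0.le, mul_comm]
    rw [← le_div_iff₀ (by positivity)] at h2
    calc ‖gterm a b c (n+1)‖ ≤ (K+1) / (n:ℝ)^(1+ε) := h2
      _ = ((n:ℝ)^(1+ε))⁻¹ * (K+1) := by ring
    
lemma tendsto_mul_gterm (a b c : ℂ) (hc : ∀ m : ℕ, c ≠ -m) (hre : 0 < (c-a-b).re) :
    Tendsto (fun k : ℕ => (k:ℂ) * gterm a b c k) atTop (𝓝 0) := by
  set ε := (c-a-b).re
  rw [← tendsto_add_atTop_iff_nat 1]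
  rw [tendsto_zero_iff_norm_tendsto_zero]
  have h1 : Tendsto (fun n : ℕ => (((n:ℝ)+1) * ‖gterm a b c (n+1)‖ * (n:ℝ)^ε) * (n:ℝ)^(-ε))
      atTop (𝓝 (‖Complex.Gamma c / (Complex.Gamma a * Complex.Gamma b)‖ * 0)) := by
    apply (key_tendsto_norm a b c hc).mul
    exact (tendsto_rpow_neg_atTop hre).comp tendsto_natCast_atTop_atTop
  rw [mul_zero] at h1
  apply h1.congr'
  filter_upwards [eventually_ge_atTop 1] with n hn
  have hn0 : (0:ℝ) < (n:ℝ) := by exact_mod_cast Nat.pos_of_ne_zero (by omega)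
  have : (n:ℝ)^ε * (n:ℝ)^(-ε) = 1 := by
    rw [← Real.rpow_add hn0]; simp
  rw [norm_mul]
  have h2 : ‖((n+1:ℕ):ℂ)‖ = (n:ℝ)+1 := by rw [Complex.norm_natCast]; push_cast; ring
  rw [h2]
  calc ((n:ℝ)+1) * ‖gterm a b c (n+1)‖ * (n:ℝ)^ε * (n:ℝ)^(-ε)
      = ((n:ℝ)+1) * ‖gterm a b c (n+1)‖ * ((n:ℝ)^ε * (n:ℝ)^(-ε)) := by ring
    _ = ((n:ℝ)+1) * ‖gterm a b c (n+1)‖ := by rw [this, mul_one]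

lemma gterm_identity (a b c : ℂ) (hc : ∀ m : ℕ, c ≠ -m) (k : ℕ) :
    c*(c-a-b) * gterm a b c k - (c-a)*(c-b) * gterm a b (c+1) k
      = -c * (((k+1:ℕ):ℂ) * gterm a b c (k+1) - (k:ℕ) * gterm a b c k) := by
  have hc0 : c ≠ 0 := by simpa using hc 0
  have hck : c + k ≠ 0 := fun h => hc k (by linear_combination h)
  have hpc : gpoch c k ≠ 0 := gpoch_ne_zero hc k
  have hpc1 : gpoch (c+1) k = gpoch c k * (c + k) / c := by
    rw [eq_div_iff hc0, ← gpoch_succ, gpoch_succ_left, mul_comm]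
  have hfk : (k.factorial : ℂ) ≠ 0 := Nat.cast_ne_zero.2 k.factorial_ne_zero
  have hfs : ((k+1).factorial : ℂ) = ((k:ℂ)+1) * (k.factorial : ℂ) := by
    rw [Nat.factorial_succ]; push_cast; ring
  have hk1 : ((k:ℂ)+1) ≠ 0 := by
    have : ((k:ℂ)+1) = ((k+1 : ℕ) : ℂ) := by push_cast; ring
    rw [this]; exact Nat.cast_ne_zero.2 (Nat.succ_ne_zero k)
  simp only [gterm, gpoch_succ, hpc1, hfs]
  push_cast
  field_simp
  ring

lemma gterm_recurrence (a b c : ℂ) (hc : ∀ m : ℕ, c ≠ -m) (hre : 0 < (c-a-b).re) :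
    ∑' k, gterm a b c k = (c-a)*(c-b)/(c*(c-a-b)) * ∑' k, gterm a b (c+1) k := by
  have hc0 : c ≠ 0 := by simpa using hc 0
  have hcab : c - a - b ≠ 0 := fun h => by simp [h] at hre
  have hc1 : ∀ m : ℕ, c + 1 ≠ -m := by
    intro m h
    exact hc (m+1) (by push_cast; linear_combination h)
  have hre1 : 0 < (c+1-a-b).re := by
    have : (c+1-a-b).re = (c-a-b).re + 1 := by simp [Complex.sub_re, Complex.add_re]; ring
    rw [this]; linarith
  have hs1 : Summable (gterm a b c) := (summable_norm_gterm a b c hc hre).of_norm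
  have hs2 : Summable (gterm a b (c+1)) := (summable_norm_gterm a b (c+1) hc1 hre1).of_norm
  have h1 := hs1.hasSum
  have h2 := hs2.hasSum
  have hG : HasSum (fun k => c*(c-a-b) * gterm a b c k - (c-a)*(c-b) * gterm a b (c+1) k)
      (c*(c-a-b) * ∑' k, gterm a b c k - (c-a)*(c-b) * ∑' k, gterm a b (c+1) k) :=
    (h1.mul_left _).sub (h2.mul_left _)
  set g : ℕ → ℂ := fun k => (k:ℂ) * gterm a b c k with hg
  have hGg : HasSum (fun k => g (k+1) - g k)
      ((-c)⁻¹ * (c*(c-a-b) * ∑' k, gterm a b c k - (c-a)*(c-b) * ∑' k, gterm a b (c+1) k)) := by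
    apply (hG.mul_left ((-c)⁻¹)).congr_fun
    intro k
    rw [gterm_identity a b c hc k]
    rw [← mul_assoc, inv_mul_cancel₀ (neg_ne_zero.2 hc0), one_mul]
  have hT : HasSum (fun k => g (k+1) - g k) 0 := by
    rw [hGg.summable.hasSum_iff_tendsto_nat]
    have htel : ∀ n : ℕ, ∑ i ∈ range n, (g (i+1) - g i) = g n := by
      intro n
      rw [Finset.sum_range_sub g n]
      simp [hg, gterm]
    simp_rw [htel]
    exact tendsto_mul_gterm a b c hc hre
  have h0 := hGg.unique hT
  have hnc : (-c)⁻¹ ≠ 0 := inv_ne_zero (neg_ne_zero.2 hc0)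
  have hkey : c*(c-a-b) * ∑' k, gterm a b c k - (c-a)*(c-b) * ∑' k, gterm a b (c+1) k = 0 :=
    (mul_eq_zero.1 h0).resolve_left hnc
  rw [div_mul_eq_mul_div, eq_div_iff (mul_ne_zero hc0 hcab)]
  linear_combination hkey

lemma gterm_iterate (a b c : ℂ) (hc : ∀ m : ℕ, c ≠ -m) (hre : 0 < (c-a-b).re) (n : ℕ) :
    ∑' k, gterm a b c k
      = (gpoch (c-a) n * gpoch (c-b) n / (gpoch c n * gpoch (c-a-b) n))
          * ∑' k, gterm a b (c+n) k := by
  induction n with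
  | zero => simp [gpoch_zero]
  | succ n ih =>
    have hcn : ∀ m : ℕ, c + n ≠ -m := by
      intro m h
      exact hc (m+n) (by push_cast; linear_combination h)
    have hren : 0 < (c + n - a - b).re := by
      have : (c + n - a - b).re = (c-a-b).re + n := by
        simp [Complex.sub_re, Complex.add_re]; ring
      rw [this]; positivity
    have hrec := gterm_recurrence a b (c + n) hcn hren
    have hshift : (c : ℂ) + n + 1 = c + ((n+1 : ℕ) : ℂ) := by push_cast; ring
    rw [ih, hrec, hshift]
    rw [gpoch_succ, gpoch_succ, gpoch_succ, gpoch_succ]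
    have e1 : c - a + n = c + (n:ℂ) - a := by ring
    have e2 : c - b + n = c + (n:ℂ) - b := by ring
    have e3 : c - a - b + n = c + (n:ℂ) - a - b := by ring
    rw [e1, e2, e3]
    generalize (∑' k, gterm a b (c + ((n+1:ℕ):ℂ)) k) = S
    field_simp

lemma prod_limit (a b c : ℂ) (hc : ∀ m : ℕ, c ≠ -m) (hre : 0 < (c-a-b).re) :
    Tendsto (fun n : ℕ => gpoch (c-a) n * gpoch (c-b) n / (gpoch c n * gpoch (c-a-b) n)) atTop
      (𝓝 (Complex.Gamma c * Complex.Gamma (c-a-b) /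
        (Complex.Gamma (c-a) * Complex.Gamma (c-b)))) := by
  have hΓc : Complex.Gamma c ≠ 0 := Complex.Gamma_ne_zero hc
  have hΓcab : Complex.Gamma (c-a-b) ≠ 0 := by
    apply Complex.Gamma_ne_zero
    intro m h
    have : (c-a-b).re = -(m:ℝ) := by rw [h]; simp
    rw [this] at hre
    have : (0:ℝ) ≤ (m:ℝ) := Nat.cast_nonneg m
    linarith
  have h := (((gpoch_div_tendsto (c-a)).mul (gpoch_div_tendsto (c-b))).div
    (((gpoch_div_tendsto c).mul (gpoch_div_tendsto (c-a-b)))) (by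
      simp only [ne_eq, mul_eq_zero, inv_eq_zero, not_or]
      exact ⟨hΓc, hΓcab⟩))
  have hval : (Complex.Gamma (c-a))⁻¹ * (Complex.Gamma (c-b))⁻¹ /
      ((Complex.Gamma c)⁻¹ * (Complex.Gamma (c-a-b))⁻¹)
      = Complex.Gamma c * Complex.Gamma (c-a-b) /
        (Complex.Gamma (c-a) * Complex.Gamma (c-b)) := by
    rw [← mul_inv, ← mul_inv, div_eq_mul_inv, inv_inv, mul_comm, div_eq_mul_inv]
  rw [hval] at h
  rw [← tendsto_add_atTop_iff_nat 1]
  apply h.congr'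
  filter_upwards [eventually_ge_atTop 1] with n hn
  have hn0 : (n:ℂ) ≠ 0 := Nat.cast_ne_zero.2 (by omega)
  have ha' : (n:ℂ)^(c-a) ≠ 0 := fun h0 => hn0 ((Complex.cpow_eq_zero_iff _ _).1 h0).1
  have hb' : (n:ℂ)^(c-b) ≠ 0 := fun h0 => hn0 ((Complex.cpow_eq_zero_iff _ _).1 h0).1
  have hc' : (n:ℂ)^c ≠ 0 := fun h0 => hn0 ((Complex.cpow_eq_zero_iff _ _).1 h0).1
  have hd' : (n:ℂ)^(c-a-b) ≠ 0 := fun h0 => hn0 ((Complex.cpow_eq_zero_iff _ _).1 h0).1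
  have hfn : (n.factorial : ℂ) ≠ 0 := Nat.cast_ne_zero.2 n.factorial_ne_zero
  have hpow : (n:ℂ)^(c-a) * (n:ℂ)^(c-b) = (n:ℂ)^c * (n:ℂ)^(c-a-b) := by
    rw [← Complex.cpow_add _ _ hn0, ← Complex.cpow_add _ _ hn0]
    congr 1; ring
  have hpcn : gpoch c (n+1) ≠ 0 := gpoch_ne_zero hc (n+1)
  have hpcab : gpoch (c-a-b) (n+1) ≠ 0 := by
    apply gpoch_ne_zero
    intro m h
    have : (c-a-b).re = -(m:ℝ) := by rw [h]; simp
    rw [this] at hre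
    have : (0:ℝ) ≤ (m:ℝ) := Nat.cast_nonneg m
    linarith
  simp only [Pi.div_apply, Pi.mul_apply]
  field_simp
  linear_combination (-(gpoch (c-a) (n+1) * gpoch (c-b) (n+1))) * hpow

lemma gterm_zero (a b c : ℂ) : gterm a b c 0 = 1 := by
  simp [gterm, gpoch_zero]

lemma gterm_ofReal (u v w : ℝ) (m : ℕ) :
    gterm (u:ℂ) (v:ℂ) (w:ℂ) m
      = ((((∏ j ∈ range m, (u+j)) * (∏ j ∈ range m, (v+j))
          / ((∏ j ∈ range m, (w+j)) * m.factorial)) : ℝ) : ℂ) := by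
  rw [gterm, gpoch_prod, gpoch_prod, gpoch_prod]
  push_cast
  ring

lemma norm_gterm_eq (x y z : ℂ) (m : ℕ) :
    ‖gterm x y z m‖ = ‖gpoch x m‖ * ‖gpoch y m‖ / (‖gpoch z m‖ * m.factorial) := by
  rw [gterm, norm_div, norm_mul, norm_mul, Complex.norm_natCast]

lemma norm_gpoch_le (x : ℂ) (m : ℕ) :
    ‖gpoch x m‖ ≤ ∏ j ∈ range m, (‖x‖ + j) := by
  rw [gpoch_prod, norm_prod]
  apply Finset.prod_le_prod (fun _ _ => norm_nonneg _)
  intro j _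
  calc ‖x + (j:ℂ)‖ ≤ ‖x‖ + ‖(j:ℂ)‖ := norm_add_le _ _
    _ = ‖x‖ + j := by rw [Complex.norm_natCast]

lemma norm_gpoch_ge (x : ℂ) (m : ℕ) (hx : 0 < x.re) :
    ∏ j ∈ range m, (x.re + j) ≤ ‖gpoch x m‖ := by
  rw [gpoch_prod, norm_prod]
  apply Finset.prod_le_prod
  · intro j _; positivity
  · intro j _
    calc x.re + (j:ℝ) = (x + (j:ℂ)).re := by simp
      _ ≤ ‖x + (j:ℂ)‖ := Complex.re_le_norm _

set_option maxHeartbeats 2000000 in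
lemma tail_tendsto (a b c : ℂ) (hre : 0 < (c-a-b).re) :
    Tendsto (fun n : ℕ => ∑' k, gterm a b (c + n) k) atTop (𝓝 1) := by
  set A := ‖a‖ with hA
  set B := ‖b‖ with hB
  set s₀ : ℝ := A + B + 2 with hs₀
  have hA0 : 0 ≤ A := norm_nonneg a
  have hB0 : 0 ≤ B := norm_nonneg b
  have hs₀2 : 2 ≤ s₀ := by simp [hs₀]; linarith
  have hc'' : ∀ m : ℕ, ((s₀ - 1 : ℝ) : ℂ) ≠ -m := by
    intro m h
    have h2 : s₀ - 1 = -(m:ℝ) := by exact_mod_cast congrArg Complex.re h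
    have : (0:ℝ) ≤ (m:ℝ) := Nat.cast_nonneg m
    linarith
  have hre'' : 0 < (((s₀-1:ℝ):ℂ) - (A:ℂ) - (B:ℂ)).re := by
    simp only [Complex.sub_re, Complex.ofReal_re]
    simp [hs₀]
    linarith
  have hsum'' : Summable (fun k => ‖gterm (A:ℂ) (B:ℂ) ((s₀-1:ℝ):ℂ) k‖) :=
    summable_norm_gterm _ _ _ hc'' hre''
  have hsum''s : Summable (fun k => ‖gterm (A:ℂ) (B:ℂ) ((s₀-1:ℝ):ℂ) (k+1)‖) :=
    (summable_nat_add_iff 1).mpr hsum''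
  set M : ℝ := ∑' k : ℕ, ‖gterm (A:ℂ) (B:ℂ) ((s₀-1:ℝ):ℂ) (k+1)‖ with hM
  -- the eventual bound
  have hton : Tendsto (fun n : ℕ => c.re + (n:ℝ)) atTop atTop :=
    tendsto_atTop_add_const_left _ _ tendsto_natCast_atTop_atTop
  have hbound : ∀ᶠ n : ℕ in atTop,
      ‖(∑' k, gterm a b (c+n) k) - 1‖ ≤ (s₀-1) * M * (c.re + n)⁻¹ := by
    filter_upwards [hton.eventually_ge_atTop (s₀ - 1)] with n hn
    have hpos : 0 < c.re + (n:ℝ) := by linarith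
    have hcn : ∀ m : ℕ, c + (n:ℕ) ≠ -(m:ℂ) := by
      intro m h
      have h2 := congrArg Complex.re h
      simp only [Complex.add_re, Complex.natCast_re, Complex.neg_re] at h2
      have : (0:ℝ) ≤ (m:ℝ) := Nat.cast_nonneg m
      linarith
    have hren : 0 < ((c + (n:ℕ)) - a - b).re := by
      have : ((c + (n:ℕ)) - a - b).re = (c-a-b).re + n := by
        simp [Complex.sub_re, Complex.add_re]; ring
      rw [this]; positivity
    have hsn : Summable (fun k => ‖gterm a b (c+n) k‖) := summable_norm_gterm _ _ _ hcn hren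
    have hsn' : Summable (gterm a b (c+n)) := hsn.of_norm
    have hsns : Summable (fun k => ‖gterm a b (c+n) (k+1)‖) := (summable_nat_add_iff 1).mpr hsn
    rw [hsn'.tsum_eq_zero_add, gterm_zero, add_sub_cancel_left]
    have hptwise : ∀ k : ℕ, ‖gterm a b (c+n) (k+1)‖
        ≤ ((s₀-1)/(c.re+n)) * ‖gterm (A:ℂ) (B:ℂ) ((s₀-1:ℝ):ℂ) (k+1)‖ := by
      intro k
      set Pa := ∏ j ∈ range (k+1), (A + (j:ℝ)) with hPa
      set Pb := ∏ j ∈ range (k+1), (B + (j:ℝ)) with hPb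
      set Q := ∏ j ∈ range k, (s₀ + (j:ℝ)) with hQ
      set F := ((k+1).factorial : ℝ) with hF
      have hPa0 : 0 ≤ Pa := Finset.prod_nonneg fun j _ => by positivity
      have hPb0 : 0 ≤ Pb := Finset.prod_nonneg fun j _ => by positivity
      have hQ0 : 0 < Q := Finset.prod_pos fun j _ => by positivity
      have hF0 : (0:ℝ) < F := by
        rw [hF]; exact_mod_cast (k+1).factorial_pos
      -- the comparison series term is the real quotient
      have hPw : ∏ j ∈ range (k+1), ((s₀-1) + (j:ℝ)) = Q * (s₀ - 1) := by
        rw [prod_range_succ']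
        simp only [Nat.cast_zero, add_zero]
        congr 1
        apply prod_congr rfl
        intro j _
        push_cast; ring
      have hs₀1 : (0:ℝ) < s₀ - 1 := by linarith
      have hrhs : ‖gterm (A:ℂ) (B:ℂ) ((s₀-1:ℝ):ℂ) (k+1)‖ = Pa * Pb / ((Q * (s₀-1)) * F) := by
        have h0 : (0:ℝ) ≤ Pa * Pb / ((Q * (s₀-1)) * F) :=
          div_nonneg (mul_nonneg hPa0 hPb0)
            (mul_nonneg (mul_nonneg hQ0.le hs₀1.le) hF0.le)
        rw [gterm_ofReal, Complex.norm_real, hPw, Real.norm_eq_abs, _root_.abs_of_nonneg h0]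
      rw [hrhs, norm_gterm_eq]
      -- lower bound for the denominator
      have hDlow : (c.re + n) * Q ≤ ‖gpoch (c + (n:ℕ)) (k+1)‖ := by
        have h1 : ∏ j ∈ range (k+1), ((c + (n:ℕ)).re + (j:ℝ)) ≤ ‖gpoch (c + (n:ℕ)) (k+1)‖ := by
          apply norm_gpoch_ge
          simp only [Complex.add_re, Complex.natCast_re]
          linarith
        refine le_trans ?_ h1
        rw [prod_range_succ']
        simp only [Nat.cast_zero, add_zero, Complex.add_re, Complex.natCast_re]
        rw [mul_comm]
        apply mul_le_mul_of_nonneg_right _ hpos.le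
        apply Finset.prod_le_prod
        · intro j _; positivity
        · intro j _
          push_cast
          linarith
      have hN1 : ‖gpoch a (k+1)‖ ≤ Pa := norm_gpoch_le a (k+1)
      have hN2 : ‖gpoch b (k+1)‖ ≤ Pb := norm_gpoch_le b (k+1)
      have hfcast : ((k+1).factorial : ℝ) = F := rfl
      have hstep : ‖gpoch a (k+1)‖ * ‖gpoch b (k+1)‖ / (‖gpoch (c + (n:ℕ)) (k+1)‖ * F)
          ≤ Pa * Pb / (((c.re+n) * Q) * F) := by
        apply div_le_div₀ (by positivity) _ (by positivity) _
        · exact mul_le_mul hN1 hN2 (norm_nonneg _) hPa0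
        · exact mul_le_mul_of_nonneg_right hDlow hF0.le
      refine le_trans hstep ?_
      have e : (s₀-1)/(c.re+n) * (Pa * Pb/(Q*(s₀-1)*F)) = Pa * Pb / ((c.re+(n:ℝ))*Q*F) := by
        rw [div_mul_div_comm, div_eq_div_iff (by positivity) (by positivity)]
        ring
      exact e.ge
    calc ‖∑' k, gterm a b (c+n) (k+1)‖
        ≤ ∑' k, ‖gterm a b (c+n) (k+1)‖ := norm_tsum_le_tsum_norm hsns
      _ ≤ ∑' k, ((s₀-1)/(c.re+n)) * ‖gterm (A:ℂ) (B:ℂ) ((s₀-1:ℝ):ℂ) (k+1)‖ :=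
          Summable.tsum_le_tsum hptwise hsns (hsum''s.mul_left _)
      _ = (s₀-1) * M * (c.re+n)⁻¹ := by
          rw [tsum_mul_left, ← hM, div_eq_mul_inv]; ring
  have hend : Tendsto (fun n : ℕ => (s₀-1) * M * (c.re + n)⁻¹) atTop (𝓝 0) := by
    rw [show (0:ℝ) = (s₀-1) * M * 0 by ring]
    exact tendsto_const_nhds.mul hton.inv_tendsto_atTop
  have h0 : Tendsto (fun n : ℕ => (∑' k, gterm a b (c+n) k) - 1) atTop (𝓝 0) :=
    squeeze_zero_norm' hbound hend
  have := h0.add (tendsto_const_nhds (x := (1:ℂ)))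
  simpa using this

theorem gauss_hypergeometric_theorem (a b c : ℂ)
    (hre : 0 < (c - a - b).re) (hc : ∀ m : ℕ, c ≠ -m) :
    HasSum
      (fun k : ℕ =>
        (ascPochhammer ℂ k).eval a * (ascPochhammer ℂ k).eval b /
          ((ascPochhammer ℂ k).eval c * (k.factorial : ℂ)))
      (Complex.Gamma c * Complex.Gamma (c - a - b) /
        (Complex.Gamma (c - a) * Complex.Gamma (c - b))) := by
  have hs : Summable (gterm a b c) := (summable_norm_gterm a b c hc hre).of_norm
  have h1 : Tendsto (fun n : ℕ =>
      (gpoch (c-a) n * gpoch (c-b) n / (gpoch c n * gpoch (c-a-b) n)) * ∑' k, gterm a b (c+n) k)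
      atTop (𝓝 ((Complex.Gamma c * Complex.Gamma (c-a-b) /
        (Complex.Gamma (c-a) * Complex.Gamma (c-b))) * 1)) :=
    (prod_limit a b c hc hre).mul (tail_tendsto a b c hre)
  have h2 : Tendsto (fun _ : ℕ => ∑' k, gterm a b c k) atTop
      (𝓝 ((Complex.Gamma c * Complex.Gamma (c-a-b) /
        (Complex.Gamma (c-a) * Complex.Gamma (c-b))) * 1)) := by
    apply h1.congr
    intro n
    exact (gterm_iterate a b c hc hre n).symm
  have hval : ∑' k, gterm a b c k
      = Complex.Gamma c * Complex.Gamma (c-a-b) /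
          (Complex.Gamma (c-a) * Complex.Gamma (c-b)) := by
    have := tendsto_nhds_unique tendsto_const_nhds h2
    rw [this, mul_one]
  have hfinal := hs.hasSum
  rw [hval] at hfinal
  exact hfinal
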